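/- Let M > 8π and β ∈ ℝ. Then the attractive free energy F⁻_β is not bounded from below on the set of admissible functions f on ℝ² with ∫_{ℝ²} f dx = M: for every C ∈ ℝ there exists an admissible f with ∫_{ℝ²} f dx = M and F⁻_β[f] < C. -/

import Mathlib

open MeasureTheory Real Filter

noncomputable section

/-- The Euclidean plane ℝ². -/
abbrev E2 := EuclideanSpace ℝ (Fin 2)

/-- The probability density μ(x) = 1/(π (1+|x|²)²) on ℝ². -/
def mu2 (x : E2) : ℝ := 1 / (π * (1 + ‖x‖ ^ 2) ^ 2)

/-- The external potential V(x) = −log μ(x) = 2 log(1+|x|²) + log π. -/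
def Vpot (x : E2) : ℝ := 2 * Real.log (1 + ‖x‖ ^ 2) + Real.log π

/-- A function f on ℝ² is admissible if it is measurable, nonnegative a.e., integrable,
and ∫ f |log f|, ∫ V f and ∬ f(x) f(y) |log|x−y|| are all finite. -/
def Admissible (f : E2 → ℝ) : Prop :=
  Measurable f ∧ (∀ᵐ x : E2, 0 ≤ f x) ∧ Integrable f ∧
  Integrable (fun x => f x * |Real.log (f x)|) ∧
  Integrable (fun x => Vpot x * f x) ∧
  Integrable (fun p : E2 × E2 => f p.1 * f p.2 * |Real.log ‖p.1 - p.2‖|)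

/-- The repulsive free energy F⁺_β. -/
def Fplus (β : ℝ) (f : E2 → ℝ) : ℝ :=
  (∫ x, f x * Real.log (f x)) + β * (∫ x, Vpot x * f x)
    - (1 / (4 * π)) * ∫ p : E2 × E2, f p.1 * f p.2 * Real.log ‖p.1 - p.2‖

/-- The attractive free energy F⁻_β. -/
def Fminus (β : ℝ) (f : E2 → ℝ) : ℝ :=
  (∫ x, f x * Real.log (f x)) + β * (∫ x, Vpot x * f x)
    + (1 / (4 * π)) * ∫ p : E2 × E2, f p.1 * f p.2 * Real.log ‖p.1 - p.2‖

/-- Volume of balls in the plane. -/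
lemma volE2 (r : ℝ) (hr : 0 ≤ r) :
    volume (Metric.ball (0:E2) r) = ENNReal.ofReal (π * r ^ 2) := by
  rw [EuclideanSpace.volume_ball]
  simp only [Fintype.card_fin]
  have h1 : Real.Gamma ((2:ℕ) / 2 + 1) = 1 := by norm_num
  rw [h1]
  have h2 : Real.sqrt π ^ (2:ℕ) = π := Real.sq_sqrt pi_pos.le
  rw [h2, ← ENNReal.ofReal_pow hr, ← ENNReal.ofReal_mul (by positivity)]
  ring_nf

/-- The diagonal is null in the product plane. -/
lemma diag_null : (volume : Measure (E2 × E2)) {p | p.1 = p.2} = 0 := by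
  rw [MeasureTheory.Measure.volume_eq_prod]
  have hs : MeasurableSet {p : E2 × E2 | p.1 = p.2} :=
    (isClosed_eq continuous_fst continuous_snd).measurableSet
  rw [MeasureTheory.Measure.prod_apply hs]
  have : ∀ x : E2, (Prod.mk x ⁻¹' {p : E2 × E2 | p.1 = p.2}) = {x} := by
    intro x; ext y; simp [eq_comm]
  simp [this]

/-- Local integrability of the logarithm in the plane. -/
lemma logInt (r : ℝ) (hr1 : r ≤ 1) :
    IntegrableOn (fun x : E2 => |Real.log ‖x‖|) (Metric.ball 0 r) := by
  have hmeas : Measurable fun x : E2 => |Real.log ‖x‖| :=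
    (Real.measurable_log.comp measurable_norm).abs
  refine ⟨hmeas.aestronglyMeasurable.restrict, ?_⟩
  rw [hasFiniteIntegral_iff_norm]
  have hcong : ∀ᵐ x ∂(volume.restrict (Metric.ball (0:E2) r)),
      ENNReal.ofReal ‖|Real.log ‖x‖|‖ = ENNReal.ofReal (-Real.log ‖x‖) := by
    refine (ae_restrict_iff' measurableSet_ball).2 (ae_of_all _ fun x hx => ?_)
    have hx1 : ‖x‖ ≤ 1 := by
      have := mem_ball_zero_iff.1 hx; linarith
    have hlog : Real.log ‖x‖ ≤ 0 := Real.log_nonpos (norm_nonneg x) hx1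
    rw [Real.norm_eq_abs, abs_abs, abs_of_nonpos hlog]
  rw [lintegral_congr_ae hcong]
  have hnn : 0 ≤ᵐ[volume.restrict (Metric.ball (0:E2) r)] fun x : E2 => -Real.log ‖x‖ := by
    refine (ae_restrict_iff' measurableSet_ball).2 (ae_of_all _ fun x hx => ?_)
    have hx1 : ‖x‖ ≤ 1 := by have := mem_ball_zero_iff.1 hx; linarith
    simpa using Real.log_nonpos (norm_nonneg x) hx1
  rw [lintegral_eq_lintegral_meas_lt _ hnn
    ((Real.measurable_log.comp measurable_norm).neg.aemeasurable)]
  have hbound : ∀ t ∈ Set.Ioi (0:ℝ),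
      (volume.restrict (Metric.ball (0:E2) r)) {a : E2 | t < -Real.log ‖a‖}
        ≤ ENNReal.ofReal (π * Real.exp (-t) ^ 2) := by
    intro t ht
    have hsub : {a : E2 | t < -Real.log ‖a‖} ⊆ Metric.ball 0 (Real.exp (-t)) := by
      intro a ha
      simp only [Set.mem_setOf_eq] at ha
      rw [mem_ball_zero_iff]
      by_contra hcon
      push_neg at hcon
      have : Real.log (Real.exp (-t)) ≤ Real.log ‖a‖ :=
        Real.log_le_log (Real.exp_pos _) hcon
      rw [Real.log_exp] at this
      linarith
    calc (volume.restrict (Metric.ball (0:E2) r)) {a : E2 | t < -Real.log ‖a‖}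
        ≤ volume {a : E2 | t < -Real.log ‖a‖} := Measure.restrict_le_self _
      _ ≤ volume (Metric.ball (0:E2) (Real.exp (-t))) := measure_mono hsub
      _ = ENNReal.ofReal (π * Real.exp (-t) ^ 2) := volE2 _ (Real.exp_pos _).le
  calc ∫⁻ t in Set.Ioi (0:ℝ), (volume.restrict (Metric.ball (0:E2) r)) {a : E2 | t < -Real.log ‖a‖}
      ≤ ∫⁻ t in Set.Ioi (0:ℝ), ENNReal.ofReal (π * Real.exp (-t) ^ 2) := by
        refine lintegral_mono_ae ?_
        exact (ae_restrict_iff' measurableSet_Ioi).2 (ae_of_all _ hbound)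
    _ < ⊤ := by
        have hInt : IntegrableOn (fun t : ℝ => π * Real.exp (-2 * t)) (Set.Ioi 0) :=
          (exp_neg_integrableOn_Ioi 0 two_pos).const_mul π
        have h2 := hInt.2
        rw [hasFiniteIntegral_iff_norm] at h2
        refine lt_of_le_of_lt (lintegral_mono fun t => ?_) h2
        have he : Real.exp (-t) ^ 2 = Real.exp (-2 * t) := by
          rw [← Real.exp_nat_mul]; ring_nf
        rw [he]
        exact ENNReal.ofReal_le_ofReal (le_abs_self _)

set_option maxHeartbeats 1000000 in
/-- For M > 8π the attractive free energy F⁻_β is not bounded from below. -/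
theorem Fminus_unbounded_below (M β : ℝ) (hM : 8 * π < M) :
    ∀ C : ℝ, ∃ f : E2 → ℝ, Admissible f ∧ (∫ x, f x) = M ∧ Fminus β f < C := by
  intro C
  have hπ : 0 < π := pi_pos
  have hM0 : 0 < M := by nlinarith
  set K : ℝ := 2 * Real.log 2 + Real.log π with hKdef
  have hK0 : 0 ≤ K := by
    have h1 : 0 ≤ Real.log 2 := Real.log_nonneg (by norm_num)
    have h2 : 0 ≤ Real.log π := Real.log_nonneg (by nlinarith [Real.pi_gt_three])
    simp only [hKdef]; linarith
  set K0 : ℝ := M * (Real.log M - Real.log π) + |β| * (M * K) + M ^ 2 / (4 * π) * Real.log 2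
    with hK0def
  set c : ℝ := M ^ 2 / (4 * π) - 2 * M with hcdef
  have hc : 0 < c := by
    rw [hcdef, sub_pos, lt_div_iff₀ (by positivity)]
    nlinarith
  set t : ℝ := min (Real.log (1 / 2)) ((C - K0 - 1) / c) with htdef
  set R : ℝ := Real.exp t with hRdef
  have hR : 0 < R := Real.exp_pos t
  have hlogR : Real.log R = t := Real.log_exp t
  have hR2 : R ≤ 1 / 2 := by
    calc R = Real.exp t := rfl
      _ ≤ Real.exp (Real.log (1 / 2)) := Real.exp_le_exp.2 (min_le_left _ _)
      _ = 1 / 2 := Real.exp_log (by norm_num)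
  set a : ℝ := M / (π * R ^ 2) with hadef
  have ha : 0 < a := by positivity
  set B : Set E2 := Metric.ball (0 : E2) R with hBdef
  have hBmeas : MeasurableSet B := measurableSet_ball
  set f : E2 → ℝ := Set.indicator B (fun _ => a) with hfdef
  have hf0 : ∀ x, 0 ≤ f x := fun x => Set.indicator_nonneg (fun _ _ => ha.le) x
  have hfmeas : Measurable f := measurable_const.indicator hBmeas
  have hvolB : volume B = ENNReal.ofReal (π * R ^ 2) := volE2 R hR.le
  have hvolBR : (volume B).toReal = π * R ^ 2 := by
    rw [hvolB, ENNReal.toReal_ofReal (by positivity)]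
  have hBfin : volume B < ⊤ := by rw [hvolB]; exact ENNReal.ofReal_lt_top
  -- an integrable function for indicator constants on B
  have hIndInt : ∀ e : ℝ, Integrable (Set.indicator B (fun _ => e)) := fun e =>
    (integrable_indicator_iff hBmeas).2 (integrableOn_const hBfin.ne)
  have hIndVal : ∀ e : ℝ, (∫ x, Set.indicator B (fun _ => e) x) = (π * R ^ 2) * e := by
    intro e
    rw [integral_indicator_const e hBmeas, measureReal_def, hvolBR, smul_eq_mul]
  have hπR2 : π * R ^ 2 ≠ 0 := by positivity
  -- mass
  have hmass : (∫ x, f x) = M := by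
    rw [hfdef, hIndVal a, hadef]; field_simp
  -- entropy
  have hEeq : (fun x => f x * Real.log (f x)) = Set.indicator B (fun _ => a * Real.log a) := by
    funext x
    by_cases hx : x ∈ B
    · simp [hfdef, Set.indicator_of_mem hx]
    · simp [hfdef, Set.indicator_of_notMem hx]
  have hE : (∫ x, f x * Real.log (f x)) = M * Real.log a := by
    rw [hEeq, hIndVal, hadef]; field_simp
  -- the entropy-abs integrand
  have hEabs : (fun x => f x * |Real.log (f x)|)
      = Set.indicator B (fun _ => a * |Real.log a|) := by
    funext x
    by_cases hx : x ∈ B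
    · simp [hfdef, Set.indicator_of_mem hx]
    · simp [hfdef, Set.indicator_of_notMem hx]
  -- potential bound
  have hVb : ∀ x, ‖Vpot x * f x‖ ≤ Set.indicator B (fun _ => a * K) x := by
    intro x
    by_cases hx : x ∈ B
    · have hfx : f x = a := Set.indicator_of_mem hx _
      rw [Set.indicator_of_mem hx, hfx, Real.norm_eq_abs, abs_mul]
      have hxR : ‖x‖ < R := mem_ball_zero_iff.1 hx
      have hx1 : ‖x‖ ^ 2 ≤ 1 := by nlinarith [norm_nonneg x]
      have hV0 : 0 ≤ Vpot x := by
        have h1 : 0 ≤ Real.log (1 + ‖x‖ ^ 2) := Real.log_nonneg (by nlinarith [sq_nonneg ‖x‖])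
        have h2 : 0 ≤ Real.log π := Real.log_nonneg (by nlinarith [Real.pi_gt_three])
        unfold Vpot; linarith
      have hVK : Vpot x ≤ K := by
        have h1 : Real.log (1 + ‖x‖ ^ 2) ≤ Real.log 2 :=
          Real.log_le_log (by positivity) (by nlinarith)
        simp only [hKdef]; unfold Vpot; linarith
      rw [abs_of_nonneg hV0, abs_of_nonneg ha.le, mul_comm a K]
      exact mul_le_mul_of_nonneg_right hVK ha.le
    · have hfx : f x = 0 := Set.indicator_of_notMem hx _
      rw [Set.indicator_of_notMem hx]
      simp [hfx]
  have hVf : Integrable (fun x => Vpot x * f x) := by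
    refine Integrable.mono' (hIndInt (a * K)) ?_ (ae_of_all _ hVb)
    have hVm : Measurable Vpot := by
      unfold Vpot
      have h0 : Measurable fun x : E2 => 1 + ‖x‖ ^ 2 := by fun_prop
      exact ((Real.measurable_log.comp h0).const_mul 2).add_const _
    exact (hVm.mul hfmeas).aestronglyMeasurable
  have hT : |∫ x, Vpot x * f x| ≤ M * K := by
    have h1 : ‖∫ x, Vpot x * f x‖ ≤ ∫ x, Set.indicator B (fun _ => a * K) x :=
      norm_integral_le_of_norm_le (hIndInt (a * K)) (ae_of_all _ hVb)
    rw [Real.norm_eq_abs] at h1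
    rw [hIndVal (a * K), hadef] at h1
    calc |∫ x, Vpot x * f x| ≤ π * R ^ 2 * (M / (π * R ^ 2) * K) := h1
      _ = M * K := by field_simp
  -- double-integral integrability
  have h2R1 : 2 * R ≤ 1 := by linarith
  have hk : Integrable (Set.indicator (Metric.ball (0:E2) (2 * R)) fun x => |Real.log ‖x‖|) :=
    (integrable_indicator_iff measurableSet_ball).2 (logInt (2 * R) h2R1)
  have h1B : Integrable (Set.indicator B fun _ => (1:ℝ)) := hIndInt 1
  have hconv : Integrable (fun p : E2 × E2 =>
      (Set.indicator B (fun _ => (1:ℝ)) p.2) *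
        (Set.indicator (Metric.ball (0:E2) (2 * R)) (fun x => |Real.log ‖x‖|) (p.1 - p.2))) := by
    have := h1B.convolution_integrand (ContinuousLinearMap.mul ℝ ℝ) hk
    rw [← MeasureTheory.Measure.volume_eq_prod] at this
    simpa using this
  have hhabs_meas : Measurable (fun p : E2 × E2 => f p.1 * f p.2 * |Real.log ‖p.1 - p.2‖|) :=
    ((hfmeas.comp measurable_fst).mul (hfmeas.comp measurable_snd)).mul
      ((Real.measurable_log.comp (measurable_fst.sub measurable_snd).norm).abs)
  have hhabs : Integrable (fun p : E2 × E2 => f p.1 * f p.2 * |Real.log ‖p.1 - p.2‖|) := by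
    refine Integrable.mono' (hconv.const_mul (a ^ 2)) hhabs_meas.aestronglyMeasurable
      (ae_of_all _ fun p => ?_)
    rw [Real.norm_eq_abs,
      abs_of_nonneg (mul_nonneg (mul_nonneg (hf0 _) (hf0 _)) (abs_nonneg _))]
    by_cases h2 : p.2 ∈ B
    · by_cases h1 : p.1 ∈ B
      · have hd : p.1 - p.2 ∈ Metric.ball (0:E2) (2 * R) := by
          rw [mem_ball_zero_iff]
          calc ‖p.1 - p.2‖ ≤ ‖p.1‖ + ‖p.2‖ := norm_sub_le _ _
            _ < 2 * R := by
              have := mem_ball_zero_iff.1 h1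
              have := mem_ball_zero_iff.1 h2
              linarith
        rw [hfdef]
        rw [Set.indicator_of_mem h1, Set.indicator_of_mem h2, Set.indicator_of_mem h2,
          Set.indicator_of_mem hd]
        ring_nf
        exact le_refl _
      · have : f p.1 = 0 := Set.indicator_of_notMem h1 _
        rw [this, zero_mul, zero_mul]
        have hknn : 0 ≤ Set.indicator (Metric.ball (0:E2) (2 * R))
            (fun x => |Real.log ‖x‖|) (p.1 - p.2) :=
          Set.indicator_nonneg (fun _ _ => abs_nonneg _) _
        have h1nn : (0:ℝ) ≤ Set.indicator B (fun _ => (1:ℝ)) p.2 :=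
          Set.indicator_nonneg (fun _ _ => zero_le_one) _
        positivity
    · have : f p.2 = 0 := Set.indicator_of_notMem h2 _
      rw [this, mul_zero, zero_mul]
      have hknn : 0 ≤ Set.indicator (Metric.ball (0:E2) (2 * R))
          (fun x => |Real.log ‖x‖|) (p.1 - p.2) :=
        Set.indicator_nonneg (fun _ _ => abs_nonneg _) _
      have h1nn : (0:ℝ) ≤ Set.indicator B (fun _ => (1:ℝ)) p.2 :=
        Set.indicator_nonneg (fun _ _ => zero_le_one) _
      positivity
  -- interaction integral bound
  have hhmeas : Measurable (fun p : E2 × E2 => f p.1 * f p.2 * Real.log ‖p.1 - p.2‖) :=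
    ((hfmeas.comp measurable_fst).mul (hfmeas.comp measurable_snd)).mul
      (Real.measurable_log.comp (measurable_fst.sub measurable_snd).norm)
  have hhint : Integrable (fun p : E2 × E2 => f p.1 * f p.2 * Real.log ‖p.1 - p.2‖) := by
    refine (integrable_norm_iff hhmeas.aestronglyMeasurable).1 ?_
    have : (fun p : E2 × E2 => ‖f p.1 * f p.2 * Real.log ‖p.1 - p.2‖‖)
        = fun p : E2 × E2 => f p.1 * f p.2 * |Real.log ‖p.1 - p.2‖| := by
      funext p
      rw [Real.norm_eq_abs, abs_mul, abs_mul, abs_of_nonneg (hf0 _), abs_of_nonneg (hf0 _)]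
    rw [this]; exact hhabs
  have hBBmeas : MeasurableSet (B ×ˢ B) := hBmeas.prod hBmeas
  have hBBfin : (volume : Measure (E2 × E2)) (B ×ˢ B) < ⊤ := by
    rw [MeasureTheory.Measure.volume_eq_prod, MeasureTheory.Measure.prod_prod]
    exact ENNReal.mul_lt_top hBfin hBfin
  have hgInt : Integrable (Set.indicator (B ×ˢ B) (fun _ => a ^ 2 * Real.log (2 * R))
      : E2 × E2 → ℝ) :=
    (integrable_indicator_iff hBBmeas).2 (integrableOn_const hBBfin.ne)
  have hgval : (∫ p : E2 × E2, Set.indicator (B ×ˢ B) (fun _ => a ^ 2 * Real.log (2 * R)) p)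
      = M ^ 2 * Real.log (2 * R) := by
    rw [integral_indicator_const _ hBBmeas, smul_eq_mul]
    rw [measureReal_def, MeasureTheory.Measure.volume_eq_prod, MeasureTheory.Measure.prod_prod,
      ENNReal.toReal_mul, hvolBR, hadef]
    field_simp
  have hae_ne : ∀ᵐ p : E2 × E2, p.1 ≠ p.2 := by
    rw [ae_iff]
    simpa using diag_null
  have hIle : (∫ p : E2 × E2, f p.1 * f p.2 * Real.log ‖p.1 - p.2‖)
      ≤ M ^ 2 * Real.log (2 * R) := by
    rw [← hgval]
    refine integral_mono_ae hhint hgInt ?_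
    filter_upwards [hae_ne] with p hp
    by_cases h1 : p.1 ∈ B
    · by_cases h2 : p.2 ∈ B
      · have hmem : p ∈ B ×ˢ B := Set.mk_mem_prod h1 h2
        have hfx1 : f p.1 = a := Set.indicator_of_mem h1 _
        have hfx2 : f p.2 = a := Set.indicator_of_mem h2 _
        rw [hfx1, hfx2, Set.indicator_of_mem hmem]
        have hdpos : 0 < ‖p.1 - p.2‖ := by
          rw [norm_pos_iff]; exact sub_ne_zero.2 hp
        have hdlt : ‖p.1 - p.2‖ ≤ 2 * R := by
          calc ‖p.1 - p.2‖ ≤ ‖p.1‖ + ‖p.2‖ := norm_sub_le _ _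
            _ ≤ 2 * R := by
              have := mem_ball_zero_iff.1 h1
              have := mem_ball_zero_iff.1 h2
              linarith
        have hlog : Real.log ‖p.1 - p.2‖ ≤ Real.log (2 * R) :=
          Real.log_le_log hdpos hdlt
        calc a * a * Real.log ‖p.1 - p.2‖ = a ^ 2 * Real.log ‖p.1 - p.2‖ := by ring
          _ ≤ a ^ 2 * Real.log (2 * R) := mul_le_mul_of_nonneg_left hlog (sq_nonneg a)
      · have hfx2 : f p.2 = 0 := Set.indicator_of_notMem h2 _
        have hnm : p ∉ B ×ˢ B := fun hmem => h2 hmem.2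
        rw [hfx2, Set.indicator_of_notMem hnm]
        simp
    · have hfx1 : f p.1 = 0 := Set.indicator_of_notMem h1 _
      have hnm : p ∉ B ×ˢ B := fun hmem => h1 hmem.1
      rw [hfx1, Set.indicator_of_notMem hnm]
      simp
  -- admissibility
  have hAdm : Admissible f := by
    refine ⟨hfmeas, ae_of_all _ hf0, hIndInt a, ?_, hVf, hhabs⟩
    rw [hEabs]; exact hIndInt _
  refine ⟨f, hAdm, hmass, ?_⟩
  -- final estimate
  have hloga : Real.log a = Real.log M - (Real.log π + 2 * Real.log R) := by
    rw [hadef, Real.log_div hM0.ne' hπR2, Real.log_mul hπ.ne' (by positivity)]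
    rw [Real.log_pow]
    norm_num
  have hlog2R : Real.log (2 * R) = Real.log 2 + Real.log R :=
    Real.log_mul two_ne_zero hR.ne'
  have hbT : β * (∫ x, Vpot x * f x) ≤ |β| * (M * K) := by
    calc β * (∫ x, Vpot x * f x) ≤ |β * (∫ x, Vpot x * f x)| := le_abs_self _
      _ = |β| * |∫ x, Vpot x * f x| := abs_mul _ _
      _ ≤ |β| * (M * K) := mul_le_mul_of_nonneg_left hT (abs_nonneg β)
  have hbI : (1 / (4 * π)) * (∫ p : E2 × E2, f p.1 * f p.2 * Real.log ‖p.1 - p.2‖)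
      ≤ (1 / (4 * π)) * (M ^ 2 * Real.log (2 * R)) :=
    mul_le_mul_of_nonneg_left hIle (by positivity)
  have hkey : Fminus β f ≤ K0 + c * t := by
    have : Fminus β f ≤ M * Real.log a + |β| * (M * K)
        + (1 / (4 * π)) * (M ^ 2 * Real.log (2 * R)) := by
      unfold Fminus
      rw [hE]
      exact add_le_add (add_le_add le_rfl hbT) hbI
    refine this.trans (le_of_eq ?_)
    rw [hloga, hlog2R, hK0def, hcdef, ← hlogR]
    ring
  have hct : c * t ≤ C - K0 - 1 := by
    calc c * t ≤ c * ((C - K0 - 1) / c) :=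
          mul_le_mul_of_nonneg_left (min_le_right _ _) hc.le
      _ = C - K0 - 1 := mul_div_cancel₀ _ hc.ne'
  linarith
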